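/- Let n and b be natural numbers with n ≥ 1 and b ≥ 2, and write s_i = (b+1)·b^(n+i) − 1. Then (b−1)·s_n + (b−1)·s_(n+1) is the greatest element of the Apéry set Ap(T_b(n), s_0). -/

import Mathlib

/-- The Thabit numerical semigroup base `b`: the additive submonoid of ℕ generated by
`{(b+1)·b^(n+i) − 1 : i ∈ ℕ}`. -/
def thabitSemigroup (b n : ℕ) : AddSubmonoid ℕ :=
  AddSubmonoid.closure {m : ℕ | ∃ i : ℕ, m = (b + 1) * b ^ (n + i) - 1}

namespace ThabitProof


/-- Sum of generators indexed by a list lies in the semigroup. -/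
lemma sum_mem (b n : ℕ) (l : List ℕ) :
    (l.map (fun i => (b + 1) * b ^ (n + i) - 1)).sum ∈
      AddSubmonoid.closure {m : ℕ | ∃ i : ℕ, m = (b + 1) * b ^ (n + i) - 1} := by
  induction l with
  | nil => exact AddSubmonoid.zero_mem _
  | cons e l ih =>
      have hg : (b + 1) * b ^ (n + e) - 1 ∈
          ({m : ℕ | ∃ i : ℕ, m = (b + 1) * b ^ (n + i) - 1}) := ⟨e, rfl⟩
      simpa using AddSubmonoid.add_mem _ (AddSubmonoid.subset_closure hg) ih

lemma sum_generators (b n : ℕ) (hb : 1 ≤ b) (l : List ℕ) :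
    (l.map (fun i => (b + 1) * b ^ (n + i) - 1)).sum + l.length
      = (b + 1) * b ^ n * (l.map (b ^ ·)).sum := by
  induction l with
  | nil => simp
  | cons e l ih =>
      have h1 : 1 ≤ (b + 1) * b ^ (n + e) :=
        Nat.one_le_iff_ne_zero.mpr (by positivity)
      have h2 : (b + 1) * b ^ (n + e) = (b + 1) * b ^ n * b ^ e := by
        rw [pow_add]; ring
      have h3 : (b + 1) * b ^ n * (b ^ e + (l.map (b ^ ·)).sum)
          = (b + 1) * b ^ n * b ^ e + (b + 1) * b ^ n * (l.map (b ^ ·)).sum := by ring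
      simp only [List.map_cons, List.sum_cons, List.length_cons]
      omega

lemma mem_char (b n : ℕ) {x : ℕ}
    (hx : x ∈ AddSubmonoid.closure {m : ℕ | ∃ i : ℕ, m = (b + 1) * b ^ (n + i) - 1}) :
    ∃ l : List ℕ, x = (l.map (fun i => (b + 1) * b ^ (n + i) - 1)).sum := by
  induction hx using AddSubmonoid.closure_induction with
  | mem x hx =>
      obtain ⟨i, rfl⟩ := hx
      exact ⟨[i], by simp⟩
  | zero => exact ⟨[], by simp⟩
  | add x y _ _ hx hy =>
      obtain ⟨l₁, rfl⟩ := hx; obtain ⟨l₂, rfl⟩ := hy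
      exact ⟨l₁ ++ l₂, by simp⟩

lemma length_le_sum (b : ℕ) (hb : 1 ≤ b) (l : List ℕ) :
    l.length ≤ (l.map (b ^ ·)).sum := by
  induction l with
  | nil => simp
  | cons e l ih =>
      have : 1 ≤ b ^ e := Nat.one_le_pow _ _ hb
      simp only [List.map_cons, List.sum_cons, List.length_cons]; omega

lemma dvd_sum_sub_length (b : ℕ) (hb : 1 ≤ b) (l : List ℕ) :
    ((b : ℤ) - 1) ∣ ((l.map (b ^ ·)).sum : ℤ) - l.length := by
  induction l with
  | nil => simp
  | cons e l ih =>
      have h1 : ((b : ℤ) - 1) ∣ (b : ℤ) ^ e - 1 := by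
        simpa using sub_dvd_pow_sub_pow (b : ℤ) 1 e
      have h2 : (((e :: l).map (b ^ ·)).sum : ℤ) - ((e :: l).length : ℤ)
          = ((b : ℤ) ^ e - 1) + (((l.map (b ^ ·)).sum : ℤ) - l.length) := by
        push_cast [List.map_cons, List.sum_cons, List.length_cons]; ring
      rw [h2]; exact dvd_add h1 ih



lemma step (b : ℕ) (hb : 2 ≤ b) (l : List ℕ) (h : l.length < (l.map (b ^ ·)).sum) :
    ∃ l' : List ℕ, (l'.map (b ^ ·)).sum = (l.map (b ^ ·)).sum ∧
      l'.length = l.length + (b - 1) := by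
  have hex : ∃ e ∈ l, e ≠ 0 := by
    by_contra h0
    push_neg at h0
    have : l.map (b ^ ·) = l.map (fun _ => 1) :=
      List.map_congr_left fun e he => by rw [h0 e he]; simp
    rw [this] at h
    simp at h
  obtain ⟨e, he, he0⟩ := hex
  refine ⟨List.replicate b (e - 1) ++ l.erase e, ?_, ?_⟩
  · have hp : l.Perm (e :: l.erase e) := List.perm_cons_erase he
    have hsum : (l.map (b ^ ·)).sum = b ^ e + ((l.erase e).map (b ^ ·)).sum := by
      rw [(hp.map (b ^ ·)).sum_eq]; simp
    have hrep : ((List.replicate b (e - 1)).map (b ^ ·)).sum = b * b ^ (e - 1) := by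
      rw [List.map_replicate, List.sum_replicate, smul_eq_mul]
    have hpow : b ^ e = b * b ^ (e - 1) := by
      conv_lhs => rw [show e = (e - 1) + 1 by omega]
      rw [pow_succ]; ring
    rw [List.map_append, List.sum_append, hrep, hsum, hpow]
  · have hlen : (l.erase e).length = l.length - 1 := List.length_erase_of_mem he
    have : 1 ≤ l.length := List.length_pos_iff.mpr (by rintro rfl; simp at he)
    simp only [List.length_append, List.length_replicate, hlen]
    omega

lemma grow (b : ℕ) (hb : 2 ≤ b) :
    ∀ (m : ℕ) (l : List ℕ), l.length + (b - 1) * m ≤ (l.map (b ^ ·)).sum →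
    ∃ l' : List ℕ, (l'.map (b ^ ·)).sum = (l.map (b ^ ·)).sum ∧
      l'.length = l.length + (b - 1) * m := by
  intro m
  induction m with
  | zero => exact fun l _ => ⟨l, rfl, by simp⟩
  | succ m ih =>
      intro l hl
      have hlt : l.length < (l.map (b ^ ·)).sum := by
        have : 1 ≤ (b - 1) * (m + 1) := by
          have : 1 ≤ b - 1 := by omega
          nlinarith
        omega
      obtain ⟨l₁, hs₁, hl₁⟩ := step b hb l hlt
      obtain ⟨l₂, hs₂, hl₂⟩ := ih l₁ (by rw [hs₁, hl₁]; have : (b-1)*(m+1) = (b-1)*m + (b-1) := by ring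
                                         omega)
      exact ⟨l₂, by rw [hs₂, hs₁], by rw [hl₂, hl₁]; have : (b-1)*(m+1) = (b-1)*m + (b-1) := by ring
                                      omega⟩



/-- M + 2(b-1) = C * Ns -/
lemma L1 (b n : ℕ) (hb : 2 ≤ b) :
    (b - 1) * ((b + 1) * b ^ (n + n) - 1) + (b - 1) * ((b + 1) * b ^ (n + (n + 1)) - 1)
      + 2 * (b - 1)
      = (b + 1) * b ^ n * ((b - 1) * (b ^ n + b ^ (n + 1))) := by
  obtain ⟨c, rfl⟩ : ∃ c, b = c + 2 := ⟨b - 2, by omega⟩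
  simp only [show c + 2 + 1 = c + 3 from rfl, show c + 2 - 1 = c + 1 from rfl]
  set x := (c + 2) ^ n with hx
  have hx1 : 1 ≤ x := Nat.one_le_pow _ _ (by omega)
  have h1 : (c + 3) * (c + 2) ^ (n + n) = (c + 3) * (x * x) := by
    rw [pow_add]
  have h2 : (c + 3) * (c + 2) ^ (n + (n + 1)) = (c + 3) * (x * x * (c + 2)) := by
    rw [pow_add, pow_succ, ← hx]; ring
  have h3 : (c + 2) ^ (n + 1) = x * (c + 2) := by rw [pow_succ]
  rw [h1, h2, h3]
  have hP : 1 ≤ (c + 3) * (x * x) := Nat.one_le_iff_ne_zero.mpr (by positivity)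
  have hQ : 1 ≤ (c + 3) * (x * x * (c + 2)) := Nat.one_le_iff_ne_zero.mpr (by positivity)
  have e1 : (c + 1) * ((c + 3) * (x * x) - 1) + (c + 1) = (c + 1) * ((c + 3) * (x * x)) := by
    rw [← Nat.mul_succ]; congr 1; omega
  have e2 : (c + 1) * ((c + 3) * (x * x * (c + 2)) - 1) + (c + 1)
      = (c + 1) * ((c + 3) * (x * x * (c + 2))) := by
    rw [← Nat.mul_succ]; congr 1; omega
  have e3 : (c + 3) * x * ((c + 1) * (x + x * (c + 2)))
      = (c + 1) * ((c + 3) * (x * x)) + (c + 1) * ((c + 3) * (x * x * (c + 2))) := by ring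
  omega

/-- Ns = (b-1) * C -/
lemma L2 (b n : ℕ) :
    (b - 1) * (b ^ n + b ^ (n + 1)) = (b - 1) * ((b + 1) * b ^ n) := by
  congr 1
  rw [pow_succ]; ring

/-- Ns + b^n = b^(n+2) -/
lemma L3 (b n : ℕ) (hb : 2 ≤ b) :
    (b - 1) * (b ^ n + b ^ (n + 1)) + b ^ n = b ^ (n + 2) := by
  obtain ⟨c, rfl⟩ : ∃ c, b = c + 2 := ⟨b - 2, by omega⟩
  have hc1 : c + 2 - 1 = c + 1 := rfl
  rw [hc1, pow_succ, pow_succ]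
  ring

/-- (b-1) divides C - 2 (in ℤ). -/
lemma L4 (b n : ℕ) (hb : 2 ≤ b) :
    ((b : ℤ) - 1) ∣ ((b + 1) * (b : ℤ) ^ n - 2) := by
  have h1 : ((b : ℤ) - 1) ∣ ((b : ℤ) ^ n - 1) := by
    simpa using sub_dvd_pow_sub_pow (b : ℤ) 1 n
  have h2 : ((b : ℤ) + 1) * (b : ℤ) ^ n - 2
      = ((b : ℤ) + 1) * ((b : ℤ) ^ n - 1) + ((b : ℤ) - 1) := by ring
  rw [h2]
  exact dvd_add (h1.mul_left _) dvd_rfl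

/-- (b-1) divides C - 2 (in ℕ): s0 - 1 where s0 = C - 1. -/
lemma L4' (b n : ℕ) (hb : 2 ≤ b) :
    (b - 1) ∣ ((b + 1) * b ^ n - 2) := by
  have h := L4 b n hb
  have hC : 2 ≤ (b + 1) * b ^ n := by
    have : 1 ≤ b ^ n := Nat.one_le_pow _ _ (by omega)
    nlinarith
  have hcast : (((b + 1) * b ^ n - 2 : ℕ) : ℤ) = ((b : ℤ) + 1) * (b : ℤ) ^ n - 2 := by
    push_cast [Nat.cast_sub hC]; ring
  have hb1 : (((b - 1 : ℕ) : ℤ)) = (b : ℤ) - 1 := by push_cast [Nat.cast_sub (by omega : 1 ≤ b)]; ring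
  rw [← Int.natCast_dvd_natCast, hcast, hb1]
  exact h



lemma no_rep (b n : ℕ) (hb : 2 ≤ b) (hn : 1 ≤ n) (l : List ℕ)
    (hsum : (l.map (b ^ ·)).sum + 1 = (b - 1) * (b ^ n + b ^ (n + 1)))
    (hlen : l.length = 2 * b - 3) : False := by
  classical
  set p : ℕ → Bool := fun e => decide (e < n) with hp
  set l₁ := l.filter p with hl₁
  set l₂ := l.filter (fun e => !p e) with hl₂
  have hperm : (l₁ ++ l₂).Perm l := List.filter_append_perm p l
  set S1 := (l₁.map (b ^ ·)).sum with hS1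
  set S2 := (l₂.map (b ^ ·)).sum with hS2
  have hStot : S1 + S2 = (l.map (b ^ ·)).sum := by
    rw [← (hperm.map (b ^ ·)).sum_eq, List.map_append, List.sum_append]
  have hLtot : l₁.length + l₂.length = l.length := by
    rw [← hperm.length_eq, List.length_append]
  -- membership facts
  have hmem1 : ∀ e ∈ l₁, e < n := by
    intro e he
    have := List.of_mem_filter he
    simpa [hp] using this
  have hmem2 : ∀ e ∈ l₂, n ≤ e := by
    intro e he
    have := List.of_mem_filter he
    simp only [hp, Bool.not_eq_true', decide_eq_false_iff_not, not_lt] at this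
    exact this
  -- b^n divides S2
  have hd2 : b ^ n ∣ S2 := by
    apply List.dvd_sum
    intro x hx
    obtain ⟨e, he, rfl⟩ := List.mem_map.mp hx
    exact pow_dvd_pow b (hmem2 e he)
  -- S1 ≤ k₁ * b^(n-1)
  have hS1le : S1 ≤ l₁.length * b ^ (n - 1) := by
    have h := List.sum_le_card_nsmul (l₁.map (b ^ ·)) (b ^ (n - 1)) ?_
    · simpa [smul_eq_mul] using h
    · intro x hx
      obtain ⟨e, he, rfl⟩ := List.mem_map.mp hx
      exact Nat.pow_le_pow_right (by omega) (by have := hmem1 e he; omega)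
  -- key equation
  have hkey : S1 + S2 + 1 + b ^ n = b ^ (n + 2) := by
    have hL3 : (b - 1) * (b ^ n + b ^ (n + 1)) + b ^ n = b ^ (n + 2) := by
      obtain ⟨c, rfl⟩ : ∃ c, b = c + 2 := ⟨b - 2, by omega⟩
      simp only [show c + 2 - 1 = c + 1 from rfl, pow_succ]
      ring
    omega
  have hpow1 : 1 ≤ b ^ n := Nat.one_le_pow _ _ (by omega)
  -- b^n ∣ S1 + 1
  have hdvd1 : b ^ n ∣ S1 + 1 := by
    have h := Nat.dvd_sub (pow_dvd_pow b (by omega : n ≤ n + 2)) (dvd_add hd2 dvd_rfl)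
    rwa [show b ^ (n + 2) - (S2 + b ^ n) = S1 + 1 from by omega] at h
  -- S1 + 1 < 2 * b^n
  have hu : b ^ n = b ^ (n - 1) * b := by
    conv_lhs => rw [show n = (n - 1) + 1 from by omega]
    rw [pow_succ]
  set u := b ^ (n - 1) with hudef
  have hu1 : 1 ≤ u := Nat.one_le_pow _ _ (by omega)
  have hk1 : l₁.length ≤ 2 * b - 3 := by omega
  have hk1u : l₁.length * u ≤ (2 * b - 3) * u := Nat.mul_le_mul_right _ hk1
  have he1 : (2 * b - 3) * u + 3 * u = 2 * (u * b) := by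
    rw [← Nat.add_mul (2 * b - 3) 3 u, show 2 * b - 3 + 3 = 2 * b from by omega]; ring
  have hS1lt : S1 + 1 < 2 * b ^ n := by omega
  -- S1 + 1 = b^n
  obtain ⟨q, hq⟩ := hdvd1
  have hq1 : q = 1 := by
    rcases q with _ | _ | q
    · omega
    · rfl
    · exfalso
      have : b ^ n * 2 ≤ b ^ n * (q + 1 + 1) := Nat.mul_le_mul_left _ (by omega)
      omega
  rw [hq1, mul_one] at hq
  -- S2 value
  have hS2v : S2 + 2 * b ^ n = b ^ (n + 2) := by omega
  -- k₁ ≥ b - 1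
  have hk1ge : b - 1 ≤ l₁.length := by
    by_contra hcon
    push_neg at hcon
    have h1 : l₁.length * u ≤ (b - 2) * u := Nat.mul_le_mul_right _ (by omega)
    have h2 : (b - 2) * u + 2 * u = u * b := by
      rw [← Nat.add_mul (b - 2) 2 u, show b - 2 + 2 = b from by omega]; ring
    omega
  have hk2le : l₂.length ≤ b - 2 := by omega
  -- each element of l₂.map is ≤ b^(n+1)
  have hmem2' : ∀ x ∈ l₂.map (b ^ ·), x ≤ b ^ (n + 1) := by
    intro x hx
    obtain ⟨e, he, rfl⟩ := List.mem_map.mp hx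
    have hle : b ^ e ≤ S2 :=
      List.single_le_sum (fun y _ => Nat.zero_le y) _ (List.mem_map_of_mem he)
    have hlt : b ^ e < b ^ (n + 2) := by omega
    have : e < n + 2 := (Nat.pow_lt_pow_iff_right (by omega : 1 < b)).mp hlt
    exact Nat.pow_le_pow_right (by omega) (by omega)
  have hS2le : S2 ≤ l₂.length * b ^ (n + 1) := by
    have h := List.sum_le_card_nsmul (l₂.map (b ^ ·)) (b ^ (n + 1)) hmem2'
    simpa [smul_eq_mul] using h
  -- final contradiction
  set v := b ^ (n + 1) with hvdef
  have hv : b ^ (n + 2) = v * b := by rw [pow_succ]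
  have hv2 : v = b ^ n * b := by rw [hvdef, pow_succ]
  have h6 : l₂.length * v ≤ (b - 2) * v := Nat.mul_le_mul_right _ hk2le
  have h7 : (b - 2) * v + 2 * v = v * b := by
    rw [← Nat.add_mul (b - 2) 2 v, show b - 2 + 2 = b from by omega]; ring
  have h8 : b ^ n * 2 ≤ b ^ n * b := Nat.mul_le_mul_left _ (by omega)
  omega

lemma exists_w (b n : ℕ) (hb : 2 ≤ b) (hn : 1 ≤ n) (r : ℕ)
    (hr : r < (b + 1) * b ^ n - 1) :
    ∃ w ∈ AddSubmonoid.closure {m : ℕ | ∃ i : ℕ, m = (b + 1) * b ^ (n + i) - 1},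
      w % ((b + 1) * b ^ n - 1) = r ∧
      w + 2 * (b - 1) ≤ (b + 1) * b ^ n * ((b - 1) * (b ^ n + b ^ (n + 1))) := by
  set C := (b + 1) * b ^ n with hCdef
  set s0 := C - 1 with hs0def
  set Ns := (b - 1) * (b ^ n + b ^ (n + 1)) with hNsdef
  have hbn : b ≤ b ^ n := Nat.le_self_pow (by omega) b
  have hC6 : b + 1 ≤ C := Nat.le_mul_of_pos_right _ (by positivity)
  have hCb : 2 * b ≤ C := by
    have h1 : (b + 1) * b ≤ (b + 1) * b ^ n := Nat.mul_le_mul_left _ hbn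
    have h2 : 2 * b ≤ (b + 1) * b := Nat.mul_le_mul_right b (by omega)
    rw [hCdef]
    omega
  have hs02 : 2 ≤ s0 := by omega
  set t := if r % (b - 1) = 0 then 0 else (b - 1) - r % (b - 1) with htdef
  have hmod : r % (b - 1) < b - 1 := Nat.mod_lt _ (by omega)
  have htle : t ≤ b - 2 := by
    rw [htdef]; split <;> omega
  have htdvd : (b - 1) ∣ (r + t) := by
    have hdm := Nat.div_add_mod r (b - 1)
    by_cases h0 : r % (b - 1) = 0
    · exact ⟨r / (b - 1), by rw [htdef, if_pos h0]; omega⟩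
    · refine ⟨r / (b - 1) + 1, ?_⟩
      have hms : (b - 1) * (r / (b - 1) + 1) = (b - 1) * (r / (b - 1)) + (b - 1) := by ring
      rw [htdef, if_neg h0]; omega
  have hNsC : Ns = (b - 1) * C := L2 b n
  have e1 : (b - 1) * s0 + (b - 1) = Ns := by
    rw [hNsC, show C = s0 + 1 from by omega, Nat.mul_succ]
  have e2 : t * s0 ≤ (b - 2) * s0 := Nat.mul_le_mul_right _ htle
  have e3 : (b - 2) * s0 + s0 = (b - 1) * s0 := by
    rw [show b - 1 = b - 2 + 1 from by omega]; ring
  have hrts : r + t * s0 + b ≤ Ns := by omega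
  set K0 := Ns - (r + t * s0) with hK0def
  have hK0b : b ≤ K0 := by omega
  have hK0Ns : K0 ≤ Ns := by omega
  have hdvdK0 : (b - 1) ∣ K0 := by
    have hdvds01 : (b - 1) ∣ (s0 - 1) := by
      rw [show s0 - 1 = (b + 1) * b ^ n - 2 from by omega]
      exact L4' b n hb
    obtain ⟨k, hk⟩ := hdvds01
    have hk' : s0 = (b - 1) * k + 1 := by omega
    have h5 : t * s0 = t * k * (b - 1) + t := by rw [hk']; ring
    have hdvd2 : (b - 1) ∣ (r + t * s0) := by
      have h := dvd_add htdvd (dvd_mul_left (b - 1) (t * k))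
      rwa [show r + t + t * k * (b - 1) = r + t * s0 from by omega] at h
    have hdvdNs : (b - 1) ∣ Ns := hNsC ▸ Dvd.intro _ rfl
    exact Nat.dvd_sub hdvdNs hdvd2
  obtain ⟨q, hq⟩ := hdvdK0
  have hq2 : 2 ≤ q := by
    rcases q with _ | _ | q
    · omega
    · simp at hq; omega
    · omega
  -- base list and growth
  set l₀ : List ℕ := List.replicate (b - 1) n ++ List.replicate (b - 1) (n + 1) with hl₀
  have hsum₀ : (l₀.map (b ^ ·)).sum = Ns := by
    rw [hl₀]
    simp [List.map_append, List.map_replicate, List.sum_replicate, smul_eq_mul]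
    rw [hNsdef, Nat.mul_add]
  have hlen₀ : l₀.length = 2 * (b - 1) := by
    rw [hl₀]; simp; omega
  have hmul : (b - 1) * (q - 2) + 2 * (b - 1) = K0 := by
    have h := Nat.mul_add (b - 1) (q - 2) 2
    rw [show q - 2 + 2 = q from by omega] at h
    omega
  obtain ⟨l, hsl, hll⟩ := grow b hb (q - 2) l₀ (by rw [hsum₀, hlen₀]; omega)
  rw [hsum₀] at hsl
  rw [hlen₀] at hll
  have hlK0 : l.length = K0 := by omega
  refine ⟨(l.map (fun i => (b + 1) * b ^ (n + i) - 1)).sum, sum_mem b n l, ?_, ?_⟩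
  · have hweq := sum_generators b n (by omega) l
    rw [hsl, hlK0, ← hCdef] at hweq
    have e5 : C * Ns = s0 * Ns + Ns := by
      rw [show C = s0 + 1 from by omega, Nat.succ_mul]
    have e6 : s0 * (Ns + t) = s0 * Ns + t * s0 := by ring
    have hwval : (l.map (fun i => (b + 1) * b ^ (n + i) - 1)).sum = s0 * (Ns + t) + r := by
      omega
    rw [hwval, Nat.mul_add_mod]
    exact Nat.mod_eq_of_lt hr
  · have hweq := sum_generators b n (by omega) l
    rw [hsl, hlK0, ← hCdef] at hweq
    omega


end ThabitProof

open ThabitProof in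
theorem thabit_max_apery (n b : ℕ) (hn : 1 ≤ n) (hb : 2 ≤ b) :
    IsGreatest
      {s : ℕ | s ∈ thabitSemigroup b n ∧
        ¬ ∃ t ∈ thabitSemigroup b n, t + ((b + 1) * b ^ n - 1) = s}
      ((b - 1) * ((b + 1) * b ^ (n + n) - 1)
        + (b - 1) * ((b + 1) * b ^ (n + (n + 1)) - 1)) := by
  constructor
  · -- membership in the set
    constructor
    · -- M ∈ S
      have hg1 : (b + 1) * b ^ (n + n) - 1 ∈ thabitSemigroup b n :=
        AddSubmonoid.subset_closure ⟨n, rfl⟩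
      have hg2 : (b + 1) * b ^ (n + (n + 1)) - 1 ∈ thabitSemigroup b n :=
        AddSubmonoid.subset_closure ⟨n + 1, rfl⟩
      have h1 := AddSubmonoid.nsmul_mem _ hg1 (b - 1)
      have h2 := AddSubmonoid.nsmul_mem _ hg2 (b - 1)
      rw [nsmul_eq_mul] at h1 h2
      exact AddSubmonoid.add_mem _ h1 h2
    · -- M - s0 ∉ S
      rintro ⟨t, ht, heq⟩
      obtain ⟨l, rfl⟩ := mem_char b n ht
      have h1 := sum_generators b n (by omega) l
      have hKN := length_le_sum b (by omega) l
      have hdvdZ := dvd_sum_sub_length b (by omega) l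
      have hM2 := L1 b n hb
      have hNsC := L2 b n
      have hbn : b ≤ b ^ n := Nat.le_self_pow (by omega) b
      have hCb : 2 * b ≤ (b + 1) * b ^ n := by
        have ha : (b + 1) * b ≤ (b + 1) * b ^ n := Nat.mul_le_mul_left _ hbn
        have hb2 : 2 * b ≤ (b + 1) * b := Nat.mul_le_mul_right b (by omega)
        omega
      set C := (b + 1) * b ^ n with hCdef
      set Nl := (l.map (b ^ ·)).sum with hNldef
      set K := l.length with hKdef
      set Ns := (b - 1) * (b ^ n + b ^ (n + 1)) with hNsdef
      have hM1 : (b - 1) * ((b + 1) * b ^ (n + n) - 1)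
          + (b - 1) * ((b + 1) * b ^ (n + (n + 1)) - 1) + K + 1 = C * (Nl + 1) := by
        have e : C * (Nl + 1) = C * Nl + C := by ring
        omega
      rcases lt_trichotomy (Nl + 1) Ns with hlt | heqN | hgt
      · -- Nl + 1 < Ns : impossible
        have e : C * Ns = C * (Nl + 1) + C * (Ns - (Nl + 1)) := by
          have e0 : C * ((Nl + 1) + (Ns - (Nl + 1))) = C * (Nl + 1) + C * (Ns - (Nl + 1)) := by
            ring
          rw [show (Nl + 1) + (Ns - (Nl + 1)) = Ns from by omega] at e0
          exact e0
        have hle : C ≤ C * (Ns - (Nl + 1)) := Nat.le_mul_of_pos_right _ (by omega)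
        omega
      · -- Nl + 1 = Ns : the key impossible representation
        rw [heqN] at hM1
        have hKval : K = 2 * b - 3 := by omega
        exact no_rep b n hb hn l heqN hKval
      · -- Nl + 1 > Ns
        set j := Nl + 1 - Ns with hjdef
        have hj1 : 1 ≤ j := by omega
        have e : C * (Nl + 1) = C * Ns + C * j := by
          have e0 : C * (Ns + j) = C * Ns + C * j := by ring
          rw [show Ns + j = Nl + 1 from by omega] at e0
          exact e0
        have hKj : K + 1 = 2 * (b - 1) + C * j := by omega
        by_cases hj : b - 1 ≤ j
        · have h7 : (C - 1) * (b - 1) ≤ (C - 1) * j := Nat.mul_le_mul_left _ hj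
          have hC1 : C - 1 + 1 = C := by omega
          have e2 : (C - 1) * (b - 1) + (b - 1) = (C - 1 + 1) * (b - 1) := by ring
          have e3 : (C - 1) * j + j = (C - 1 + 1) * j := by ring
          rw [hC1] at e2 e3
          have e4 : C * (b - 1) = (b - 1) * C := by ring
          omega
        · push_neg at hj
          have hjb : j ≤ b - 2 := by omega
          zify [show 1 ≤ b from by omega] at hKj
          have hNljZ : (Nl : ℤ) + 1 = (Ns : ℤ) + (j : ℤ) := by
            have : Nl + 1 = Ns + j := by omega
            exact_mod_cast this
          have hNsCZ : (Ns : ℤ) = ((b : ℤ) - 1) * (C : ℤ) := by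
            zify [show 1 ≤ b from by omega] at hNsC
            exact hNsC
          have hC2Z : ((b : ℤ) - 1) ∣ ((C : ℤ) - 2) := by
            have h := L4 b n hb
            rw [hCdef]
            push_cast
            exact h
          have h9 : ((C : ℤ) - 1) * (j : ℤ)
              = ((b : ℤ) - 1) * ((C : ℤ) - 2) - ((Nl : ℤ) - (K : ℤ)) := by
            linear_combination (-1 : ℤ) * hKj + hNljZ + hNsCZ
          have h10 : ((b : ℤ) - 1) ∣ ((C : ℤ) - 1) * (j : ℤ) := by
            rw [h9]
            exact dvd_sub (hC2Z.mul_left _) hdvdZ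
          have h11 : ((b : ℤ) - 1) ∣ (j : ℤ) := by
            have h12 : ((C : ℤ) - 1) * j - ((C : ℤ) - 2) * j = (j : ℤ) := by ring
            rw [← h12]
            exact dvd_sub h10 (hC2Z.mul_right _)
          have h13 : (b - 1 : ℕ) ∣ j := by
            have hbc : ((b - 1 : ℕ) : ℤ) = (b : ℤ) - 1 := by omega
            rw [← Int.natCast_dvd_natCast, hbc]
            exact h11
          have := Nat.le_of_dvd (by omega) h13
          omega
  · -- upper bound
    rintro s ⟨hs, hns⟩
    have hbn : b ≤ b ^ n := Nat.le_self_pow (by omega) b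
    have hCb : 2 * b ≤ (b + 1) * b ^ n := by
      have ha : (b + 1) * b ≤ (b + 1) * b ^ n := Nat.mul_le_mul_left _ hbn
      have hb2 : 2 * b ≤ (b + 1) * b := Nat.mul_le_mul_right b (by omega)
      omega
    have hs0pos : 1 ≤ (b + 1) * b ^ n - 1 := by omega
    obtain ⟨w, hwmem, hwmod, hwle⟩ :=
      exists_w b n hb hn (s % ((b + 1) * b ^ n - 1)) (Nat.mod_lt _ (by omega))
    have hM2 := L1 b n hb
    suffices hsw : s ≤ w by omega
    by_contra hcon
    push_neg at hcon
    have hmodeq : w % ((b + 1) * b ^ n - 1) = s % ((b + 1) * b ^ n - 1) := hwmod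
    have hdvd : ((b + 1) * b ^ n - 1) ∣ s - w :=
      (Nat.modEq_iff_dvd' (le_of_lt hcon)).mp hmodeq
    obtain ⟨k, hk⟩ := hdvd
    have hk1 : 1 ≤ k := by
      rcases k with _ | k
      · simp at hk; omega
      · omega
    obtain ⟨k', rfl⟩ : ∃ k', k = k' + 1 := ⟨k - 1, by omega⟩
    have hs0mem : (b + 1) * b ^ n - 1 ∈ thabitSemigroup b n :=
      AddSubmonoid.subset_closure ⟨0, by rw [add_zero]⟩
    have hmul : k' • ((b + 1) * b ^ n - 1) ∈ thabitSemigroup b n :=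
      AddSubmonoid.nsmul_mem _ hs0mem k'
    rw [nsmul_eq_mul] at hmul
    have hmem' : w + k' * ((b + 1) * b ^ n - 1) ∈ thabitSemigroup b n :=
      AddSubmonoid.add_mem _ hwmem hmul
    have e : k' * ((b + 1) * b ^ n - 1) + ((b + 1) * b ^ n - 1)
        = ((b + 1) * b ^ n - 1) * (k' + 1) := by ring
    exact hns ⟨w + k' * ((b + 1) * b ^ n - 1), hmem', by omega⟩
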